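/- Let H ≥ 0 be a self-adjoint operator, ρ a density operator, ε ≥ 0, and suppose z ≥ 0, y ∈ ℝ, and M is an operator with M†M ≤ I such that (z/2)(M + M†) − y·I ≤ H. Then for every density operator σ with (1/2)‖σ − ρ‖₁ ≤ ε, one has tr(σH) ≥ tr(ρ[(z/2)(M + M†) − y·I]) − 2zε. In particular the dual SDP value lower-bounds the minimum energy E_{min,ε}(ρ) := inf{tr(σH) : (1/2)‖σ−ρ‖₁ ≤ ε}. -/

import Mathlib

/- STATEMENT 3: Weak duality for the minimum-energy SDP. If H ≥ 0, ρ is a density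
operator, ε ≥ 0, z ≥ 0, y ∈ ℝ, and M is a contraction (MᴴM ≤ I) with
(z/2)(M+Mᴴ) - y·I ≤ H, then every density operator σ with (1/2)‖σ-ρ‖₁ ≤ ε
satisfies tr(σH) ≥ tr(ρ[(z/2)(M+Mᴴ) - y·I]) - 2zε, and hence that dual value
lower-bounds E_{min,ε}(ρ) = inf{tr(σH) : (1/2)‖σ-ρ‖₁ ≤ ε}. -/

open Matrix
open scoped ComplexOrder
noncomputable section

def traceNorm {d : ℕ} (A : Matrix (Fin d) (Fin d) ℂ) : ℝ :=
  (((Matrix.posSemidef_conjTranspose_mul_self A).1.eigenvectorUnitary.1 *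
      diagonal ((fun r : ℝ => (r : ℂ)) ∘ Real.sqrt ∘ (Matrix.posSemidef_conjTranspose_mul_self A).1.eigenvalues) *
      (star (Matrix.posSemidef_conjTranspose_mul_self A).1.eigenvectorUnitary :
        Matrix (Fin d) (Fin d) ℂ)).trace).re

def IsDensity {d : ℕ} (ρ : Matrix (Fin d) (Fin d) ℂ) : Prop := ρ.PosSemidef ∧ ρ.trace = 1

namespace WeakDualAux

lemma trace_re_nonneg' {d : ℕ} {A : Matrix (Fin d) (Fin d) ℂ} (hA : A.PosSemidef) :
    0 ≤ (A.trace).re := by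
  rw [Matrix.trace, Complex.re_sum]
  refine Finset.sum_nonneg fun i _ => ?_
  have := hA.re_dotProduct_nonneg (Pi.single i 1)
  simpa [Matrix.mulVec_single, dotProduct, Pi.single_apply, Matrix.diag] using this

set_option maxHeartbeats 1000000 in
lemma trace_mul_re_nonneg' {d : ℕ} {A B : Matrix (Fin d) (Fin d) ℂ}
    (hA : A.PosSemidef) (hB : B.PosSemidef) : 0 ≤ ((A * B).trace).re := by
  have hAsa : IsSelfAdjoint A := hA.1
  have hs1 : (cfc Real.sqrt A)ᴴ = cfc Real.sqrt A := (cfc_predicate Real.sqrt A : IsSelfAdjoint _)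
  have hsq : cfc Real.sqrt A * cfc Real.sqrt A = A := by
    rw [← cfc_mul Real.sqrt Real.sqrt A]
    conv_rhs => rw [← cfc_id' ℝ A]
    refine cfc_congr fun t ht => ?_
    rw [hA.1.spectrum_real_eq_range_eigenvalues] at ht
    obtain ⟨i, rfl⟩ := ht
    exact Real.mul_self_sqrt (hA.eigenvalues_nonneg i)
  have h1 : A * B = cfc Real.sqrt A * (cfc Real.sqrt A * B) := by rw [← mul_assoc, hsq]
  rw [h1, Matrix.trace_mul_comm, mul_assoc]
  have := hB.conjTranspose_mul_mul_same (cfc Real.sqrt A)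
  rw [hs1, mul_assoc] at this
  exact trace_re_nonneg' this

lemma smul_posSemidef {d : ℕ} {A : Matrix (Fin d) (Fin d) ℂ} (hA : A.PosSemidef)
    {r : ℝ} (hr : 0 ≤ r) : ((r : ℂ) • A).PosSemidef := by
  constructor
  · unfold Matrix.IsHermitian
    rw [Matrix.conjTranspose_smul, hA.1, Complex.star_def, Complex.conj_ofReal]
  · exact (hA.smul (by exact_mod_cast hr : (0:ℂ) ≤ r)).2

variable {d : ℕ} {X : Matrix (Fin d) (Fin d) ℂ} (hX : X.IsHermitian)

def specF (f : ℝ → ℝ) : Matrix (Fin d) (Fin d) ℂ :=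
  (hX.eigenvectorUnitary : Matrix (Fin d) (Fin d) ℂ) *
    diagonal (RCLike.ofReal ∘ f ∘ hX.eigenvalues) *
    star (hX.eigenvectorUnitary : Matrix (Fin d) (Fin d) ℂ)

lemma star_mul_self_eq_one :
    star (hX.eigenvectorUnitary : Matrix (Fin d) (Fin d) ℂ) *
      (hX.eigenvectorUnitary : Matrix (Fin d) (Fin d) ℂ) = 1 :=
  Unitary.coe_star_mul_self hX.eigenvectorUnitary

lemma specF_id : specF hX (fun t => t) = X := (hX.spectral_theorem).symm

lemma specF_posSemidef {f : ℝ → ℝ} (hf : ∀ t, 0 ≤ f t) : (specF hX f).PosSemidef := by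
  have hd : (diagonal (RCLike.ofReal ∘ f ∘ hX.eigenvalues) :
      Matrix (Fin d) (Fin d) ℂ).PosSemidef := by
    refine Matrix.PosSemidef.diagonal fun i => ?_
    simpa using (RCLike.ofReal_nonneg (K := ℂ)).mpr (hf (hX.eigenvalues i))
  simpa [specF, Matrix.star_eq_conjTranspose] using
    hd.mul_mul_conjTranspose_same (hX.eigenvectorUnitary : Matrix (Fin d) (Fin d) ℂ)

lemma specF_trace (f : ℝ → ℝ) :
    (specF hX f).trace = ∑ i, ((f (hX.eigenvalues i) : ℂ)) := by
  rw [specF, Matrix.trace_mul_cycle, star_mul_self_eq_one, one_mul, Matrix.trace_diagonal]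
  rfl

lemma specF_mul (f g : ℝ → ℝ) :
    specF hX f * specF hX g = specF hX (fun t => f t * g t) := by
  rw [specF, specF, specF]
  rw [mul_assoc, mul_assoc, ← mul_assoc (star _), ← mul_assoc (star _),
    star_mul_self_eq_one, one_mul, ← mul_assoc, ← mul_assoc, mul_assoc _ _ (diagonal _),
    diagonal_mul_diagonal]
  congr 1
  · congr 1
    congr 1
    funext i
    simp [Function.comp_apply]

lemma specF_sub (f g : ℝ → ℝ) :
    specF hX f - specF hX g = specF hX (fun t => f t - g t) := by
  rw [specF, specF, specF, ← Matrix.sub_mul, ← Matrix.mul_sub, diagonal_sub]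
  congr 1
  · congr 1
    congr 1
    funext i
    simp [Function.comp_apply]

lemma specF_add (f g : ℝ → ℝ) :
    specF hX f + specF hX g = specF hX (fun t => f t + g t) := by
  rw [specF, specF, specF, ← Matrix.add_mul, ← Matrix.mul_add, diagonal_add]
  congr 1
  · congr 1
    congr 1
    funext i
    simp [Function.comp_apply]

lemma traceNorm_zero {d : ℕ} : traceNorm (0 : Matrix (Fin d) (Fin d) ℂ) = 0 := by
  have h0 : traceNorm (0 : Matrix (Fin d) (Fin d) ℂ) =
      ((cfc Real.sqrt ((0 : Matrix (Fin d) (Fin d) ℂ)ᴴ * 0)).trace).re := by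
    rw [Matrix.IsHermitian.cfc_eq (Matrix.posSemidef_conjTranspose_mul_self (0 : Matrix (Fin d) (Fin d) ℂ)).1]
    rfl
  rw [h0]
  simp

/-- Key trace-norm identity: for Hermitian X, `traceNorm X = tr(specF |·|)`. -/
lemma traceNorm_eq (hX : X.IsHermitian) :
    traceNorm X = ((specF hX (fun t => |t|)).trace).re := by
  have hS : (specF hX (fun t => |t|)).PosSemidef :=
    specF_posSemidef hX (fun t => abs_nonneg t)
  have hsq : (specF hX (fun t => |t|)) ^ 2 = Xᴴ * X := by
    rw [pow_two, specF_mul]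
    have h1 : (fun t : ℝ => |t| * |t|) = fun t : ℝ => t * t := by
      funext t; exact abs_mul_abs_self t
    rw [h1, ← specF_mul hX (fun t => t) (fun t => t), specF_id, hX.eq]
  have hXsa : IsSelfAdjoint X := hX
  have e1 : traceNorm X = ((cfc Real.sqrt (Xᴴ * X)).trace).re := by
    rw [Matrix.IsHermitian.cfc_eq (Matrix.posSemidef_conjTranspose_mul_self X).1]
    rfl
  have e2 : specF hX (fun t => |t|) = cfc (fun t : ℝ => |t|) X := by
    rw [Matrix.IsHermitian.cfc_eq hX]
    rfl
  have e3 : Xᴴ * X = cfc (fun t : ℝ => t ^ 2) X := by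
    rw [cfc_pow_id X 2, hX.eq, sq]
  have e4 : (fun t : ℝ => |t|) = Real.sqrt ∘ (fun t : ℝ => t ^ 2) := by
    funext t; exact (Real.sqrt_sq_eq_abs t).symm
  rw [e1, e2, e3, e4, cfc_comp Real.sqrt (fun t : ℝ => t ^ 2) X]

end WeakDualAux

open WeakDualAux


set_option maxHeartbeats 2000000

theorem min_energy_sdp_weak_duality {d : ℕ}
    (H ρ M : Matrix (Fin d) (Fin d) ℂ) (z y ε : ℝ)
    (hH : H.PosSemidef) (hρ : IsDensity ρ) (hε : 0 ≤ ε) (hz : 0 ≤ z)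
    (hM : ((1 : Matrix (Fin d) (Fin d) ℂ) - Mᴴ * M).PosSemidef)
    (hdualfeas : (H - (((z : ℂ) / 2) • (M + Mᴴ) - (y : ℂ) • 1)).PosSemidef) :
    (∀ σ : Matrix (Fin d) (Fin d) ℂ, IsDensity σ → (1 / 2) * traceNorm (σ - ρ) ≤ ε →
      ((σ * H).trace).re ≥
        ((ρ * (((z : ℂ) / 2) • (M + Mᴴ) - (y : ℂ) • 1)).trace).re - 2 * z * ε) ∧
    ((ρ * (((z : ℂ) / 2) • (M + Mᴴ) - (y : ℂ) • 1)).trace).re - 2 * z * ε ≤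
      sInf {x : ℝ | ∃ σ : Matrix (Fin d) (Fin d) ℂ,
        IsDensity σ ∧ (1 / 2) * traceNorm (σ - ρ) ≤ ε ∧ x = ((σ * H).trace).re} := by
  set A : Matrix (Fin d) (Fin d) ℂ := ((z : ℂ) / 2) • (M + Mᴴ) - (y : ℂ) • 1 with hA_def
  set B : Matrix (Fin d) (Fin d) ℂ := ((z : ℂ) / 2) • (M + Mᴴ) with hB_def
  -- PSD of z•1 ± B
  have hzc : ((z / 2 : ℝ) : ℂ) = (z : ℂ) / 2 := by push_cast; ring
  have key_pm : ∀ s : ℂ, s = 1 ∨ s = -1 →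
      ((2 : ℂ) • (1 : Matrix (Fin d) (Fin d) ℂ) + s • (M + Mᴴ)).PosSemidef := by
    intro s hs
    have hpsd := (Matrix.posSemidef_conjTranspose_mul_self (1 + s • M)).add hM
    have hexp : (1 + s • M)ᴴ * (1 + s • M) + (1 - Mᴴ * M) =
        (2 : ℂ) • (1 : Matrix (Fin d) (Fin d) ℂ) + s • (M + Mᴴ) := by
      have hss' : s * s = 1 := by rcases hs with h | h <;> simp [h]
      have hstar : star s = s := by rcases hs with h | h <;> simp [h]
      simp only [Matrix.conjTranspose_add, Matrix.conjTranspose_smul, Matrix.conjTranspose_one,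
        hstar, Matrix.add_mul, Matrix.mul_add, Matrix.smul_mul, Matrix.mul_smul, one_mul,
        mul_one, smul_smul, hss', one_smul, smul_add, two_smul]
      abel
    rw [← hexp]; exact hpsd
  have hBp : ((z : ℂ) • (1 : Matrix (Fin d) (Fin d) ℂ) + B).PosSemidef := by
    have := smul_posSemidef (key_pm 1 (Or.inl rfl)) (by linarith : (0:ℝ) ≤ z / 2)
    have heq : ((z / 2 : ℝ) : ℂ) • ((2 : ℂ) • (1 : Matrix (Fin d) (Fin d) ℂ) +
        (1 : ℂ) • (M + Mᴴ)) = (z : ℂ) • (1 : Matrix (Fin d) (Fin d) ℂ) + B := by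
      rw [hB_def, smul_add, smul_smul, smul_smul, hzc]
      congr 2
      · push_cast; ring
      · push_cast; ring
    rwa [heq] at this
  have hBm : ((z : ℂ) • (1 : Matrix (Fin d) (Fin d) ℂ) - B).PosSemidef := by
    have := smul_posSemidef (key_pm (-1) (Or.inr rfl)) (by linarith : (0:ℝ) ≤ z / 2)
    have heq : ((z / 2 : ℝ) : ℂ) • ((2 : ℂ) • (1 : Matrix (Fin d) (Fin d) ℂ) +
        (-1 : ℂ) • (M + Mᴴ)) = (z : ℂ) • (1 : Matrix (Fin d) (Fin d) ℂ) - B := by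
      rw [hB_def, smul_add, smul_smul, smul_smul, hzc, sub_eq_add_neg, ← neg_smul]
      congr 2
      · push_cast; ring
      · push_cast; ring
    rwa [heq] at this
  have main : ∀ σ : Matrix (Fin d) (Fin d) ℂ, IsDensity σ → (1 / 2) * traceNorm (σ - ρ) ≤ ε →
      ((σ * H).trace).re ≥ ((ρ * A).trace).re - 2 * z * ε := by
    intro σ hσ hdist
    have hXh : (σ - ρ).IsHermitian := hσ.1.1.sub hρ.1.1
    set X : Matrix (Fin d) (Fin d) ℂ := σ - ρ with hX_def
    set P : Matrix (Fin d) (Fin d) ℂ := specF hXh (fun t => max t 0) with hP_def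
    set N : Matrix (Fin d) (Fin d) ℂ := specF hXh (fun t => max (-t) 0) with hN_def
    set S : Matrix (Fin d) (Fin d) ℂ := specF hXh (fun t => |t|) with hS_def
    have hP : P.PosSemidef := specF_posSemidef hXh (fun t => le_max_right t 0)
    have hN : N.PosSemidef := specF_posSemidef hXh (fun t => le_max_right (-t) 0)
    have hPN : P - N = X := by
      rw [hP_def, hN_def, specF_sub]
      have : (fun t : ℝ => max t 0 - max (-t) 0) = fun t : ℝ => t := by
        funext t
        rcases le_total t 0 with h | h
        · rw [max_eq_right h, max_eq_left (neg_nonneg.mpr h)]; ring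
        · rw [max_eq_left h, max_eq_right (neg_nonpos.mpr h)]; ring
      rw [this, specF_id]
    have hPNS : P + N = S := by
      have habs : (fun t : ℝ => max t 0 + max (-t) 0) = fun t : ℝ => |t| := by
        funext t
        rcases le_total t 0 with h | h
        · rw [max_eq_right h, max_eq_left (neg_nonneg.mpr h), abs_of_nonpos h]; ring
        · rw [max_eq_left h, max_eq_right (neg_nonpos.mpr h), abs_of_nonneg h]; ring
      rw [hP_def, hN_def, hS_def, specF_add, habs]
    have htrX : X.trace = 0 := by
      rw [hX_def, Matrix.trace_sub, hσ.2, hρ.2, sub_self]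
    have htn : traceNorm X = (S.trace).re := traceNorm_eq hXh
    have htnle : (S.trace).re ≤ 2 * ε := by
      rw [← htn]; linarith
    -- trace identities
    have hPS : (P.trace).re + (N.trace).re = (S.trace).re := by
      rw [← hPNS, Matrix.trace_add, Complex.add_re]
    -- smul trace lemma
    have htr_smul : ∀ (C : Matrix (Fin d) (Fin d) ℂ) (r : ℝ),
        ((C * ((r : ℂ) • (1 : Matrix (Fin d) (Fin d) ℂ))).trace).re = r * (C.trace).re := by
      intro C r
      rw [Matrix.mul_smul, mul_one, Matrix.trace_smul, smul_eq_mul, Complex.mul_re]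
      simp
    -- bound on tr(P*B) and tr(N*B)
    have hPB : ((P * B).trace).re ≥ -(z * (P.trace).re) := by
      have h0 : 0 ≤ ((P * ((z : ℂ) • (1 : Matrix (Fin d) (Fin d) ℂ) + B)).trace).re :=
        trace_mul_re_nonneg' hP hBp
      rw [Matrix.mul_add, Matrix.trace_add, Complex.add_re, htr_smul P z] at h0
      linarith
    have hNB : ((N * B).trace).re ≤ z * (N.trace).re := by
      have h0 : 0 ≤ ((N * ((z : ℂ) • (1 : Matrix (Fin d) (Fin d) ℂ) - B)).trace).re :=
        trace_mul_re_nonneg' hN hBm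
      rw [Matrix.mul_sub, Matrix.trace_sub, Complex.sub_re, htr_smul N z] at h0
      linarith
    have hXB : ((X * B).trace).re ≥ -(z * (S.trace).re) := by
      have : X * B = P * B - N * B := by rw [← hPN, Matrix.sub_mul]
      rw [this, Matrix.trace_sub, Complex.sub_re]
      have hz3 : z * (P.trace).re + z * (N.trace).re = z * (S.trace).re := by
        rw [← hPS]; ring
      linarith
    -- tr(X*A) = tr(X*B)
    have hXA : ((X * A).trace).re = ((X * B).trace).re := by
      rw [hA_def, Matrix.mul_sub, Matrix.trace_sub, Complex.sub_re, htr_smul X y,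
        htrX]
      simp
    -- σH ≥ σA
    have hσH : ((σ * H).trace).re ≥ ((σ * A).trace).re := by
      have h0 : 0 ≤ ((σ * (H - A)).trace).re := trace_mul_re_nonneg' hσ.1 hdualfeas
      rw [Matrix.mul_sub, Matrix.trace_sub, Complex.sub_re] at h0
      linarith
    -- σA = ρA + XA
    have hsplit : ((σ * A).trace).re = ((ρ * A).trace).re + ((X * A).trace).re := by
      have : σ * A = ρ * A + X * A := by rw [hX_def, Matrix.sub_mul]; abel
      rw [this, Matrix.trace_add, Complex.add_re]
    have hz2 : z * (S.trace).re ≤ z * (2 * ε) :=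
      mul_le_mul_of_nonneg_left htnle hz
    calc ((σ * H).trace).re ≥ ((σ * A).trace).re := hσH
      _ = ((ρ * A).trace).re + ((X * A).trace).re := hsplit
      _ = ((ρ * A).trace).re + ((X * B).trace).re := by rw [hXA]
      _ ≥ ((ρ * A).trace).re - z * (S.trace).re := by linarith
      _ ≥ ((ρ * A).trace).re - 2 * z * ε := by linarith
  refine ⟨main, le_csInf ⟨((ρ * H).trace).re, ρ, hρ, ?_, rfl⟩ ?_⟩
  · have : ρ - ρ = (0 : Matrix (Fin d) (Fin d) ℂ) := sub_self ρ
    rw [this, traceNorm_zero]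
    linarith
  · rintro x ⟨σ, hσ, hd, rfl⟩
    exact main σ hσ hd
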